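/- Suppose messages are noiseless, i.e., for every player j and state ω', P_j(C | ω') > μ(C) implies P_j(C | ω') = 1, and suppose p* > μ(C), where p* = (c − b)/(a − b). Let S_A = {ω' ∈ Ω : there exists a p*-evident C-indicating event F with P_{1−i}(F | ω') ≥ p*} (the set of states where player 1−i, following the rational p-belief strategy, plays A). If at state ω there is no p*-evident C-indicating event F with P_i(F | ω) ≥ p*, then player i's expected payoff from playing A at ω, namely a·P_i(S_A ∩ C | ω) + d·P_i(S_A \ C | ω) + b·P_i(Ω \ S_A | ω), is strictly less than c. -/
import Mathlib


open Finset

variable {Ω : Type*}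

/-- The conditional probability `P_i(E | ω) = μ(E ∩ Π_i(ω)) / μ(Π_i(ω))`,
where `part i ω` is the cell of player `i`'s information partition containing `ω`. -/
noncomputable def condP [Fintype Ω] [DecidableEq Ω] (μ : Ω → ℝ)
    (part : Fin 2 → Ω → Finset Ω) (i : Fin 2) (E : Finset Ω) (ω : Ω) : ℝ :=
  (∑ x ∈ E ∩ part i ω, μ x) / (∑ x ∈ part i ω, μ x)

/-- `E` is `p`-evident: every player `p`-believes `E` at every state of `E`. -/
def pEvident [Fintype Ω] [DecidableEq Ω] (μ : Ω → ℝ)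
    (part : Fin 2 → Ω → Finset Ω) (p : ℝ) (E : Finset Ω) : Prop :=
  ∀ i : Fin 2, ∀ ω ∈ E, p ≤ condP μ part i E ω

/-- `E` is a `p`-evident `C`-indicating event. -/
def pEvidentInd [Fintype Ω] [DecidableEq Ω] (μ : Ω → ℝ)
    (part : Fin 2 → Ω → Finset Ω) (p : ℝ) (C E : Finset Ω) : Prop :=
  pEvident μ part p E ∧ ∀ i : Fin 2, ∀ ω ∈ E, p ≤ condP μ part i C ω

/-- `E` is the largest `p`-evident `C`-indicating event. -/
def isLargestInd [Fintype Ω] [DecidableEq Ω] (μ : Ω → ℝ)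
    (part : Fin 2 → Ω → Finset Ω) (p : ℝ) (C E : Finset Ω) : Prop :=
  pEvidentInd μ part p C E ∧ ∀ F : Finset Ω, pEvidentInd μ part p C F → F ⊆ E

/-- `p` is the `C`-evidence level of `E`: the maximum `q` for which `E` is a
`q`-evident `C`-indicating event. -/
def isEvidenceLevel [Fintype Ω] [DecidableEq Ω] (μ : Ω → ℝ)
    (part : Fin 2 → Ω → Finset Ω) (C E : Finset Ω) (p : ℝ) : Prop :=
  IsGreatest {q : ℝ | pEvidentInd μ part q C E} p

/-- `G` is the maximally evident `C`-indicating superset of `F`. -/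
def isMaxEvidentSup [Fintype Ω] [DecidableEq Ω] (μ : Ω → ℝ)
    (part : Fin 2 → Ω → Finset Ω) (C F G : Finset Ω) : Prop :=
  F ⊆ G ∧ ∃ p : ℝ, isEvidenceLevel μ part C G p ∧ isLargestInd μ part p C G ∧
    ∀ H : Finset Ω, F ⊆ H → ∀ q : ℝ, isEvidenceLevel μ part C H q → q ≤ p

/-- `E` is a maximally evident `C`-indicating event: it is the maximally evident
`C`-indicating superset of some nonempty event. -/
def isMaxEvident [Fintype Ω] [DecidableEq Ω] (μ : Ω → ℝ)
    (part : Fin 2 → Ω → Finset Ω) (C E : Finset Ω) : Prop :=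
  ∃ F : Finset Ω, F.Nonempty ∧ isMaxEvidentSup μ part C F E

/-- `E` is a super-`p`-evident `C`-indicating event. -/
def superEvidentInd [Fintype Ω] [DecidableEq Ω] (μ : Ω → ℝ)
    (part : Fin 2 → Ω → Finset Ω) (p : ℝ) (C E : Finset Ω) : Prop :=
  ∀ i : Fin 2, ∀ ω ∈ E, p < condP μ part i E ω ∧ p < condP μ part i C ω

/-- `E` is the largest super-evident `C`-indicating subset of `F`. -/
def isLargestSuperSub [Fintype Ω] [DecidableEq Ω] (μ : Ω → ℝ)
    (part : Fin 2 → Ω → Finset Ω) (C F E : Finset Ω) : Prop :=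
  E ⊆ F ∧ ∃ p : ℝ, isEvidenceLevel μ part C F p ∧ superEvidentInd μ part p C E ∧
    ∀ G : Finset Ω, G ⊆ F → superEvidentInd μ part p C G → G ⊆ E

section AuxLemmas

variable [Fintype Ω] [DecidableEq Ω] (μ : Ω → ℝ) (part : Fin 2 → Ω → Finset Ω)

lemma cellsum_pos (hμpos : ∀ ω : Ω, 0 < μ ω) (hmem : ∀ (i : Fin 2) (ω : Ω), ω ∈ part i ω)
    (j : Fin 2) (ω : Ω) : 0 < ∑ x ∈ part j ω, μ x :=
  Finset.sum_pos (fun x _ => (hμpos x)) ⟨ω, hmem j ω⟩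

lemma condP_mono (hμpos : ∀ ω : Ω, 0 < μ ω) (hmem : ∀ (i : Fin 2) (ω : Ω), ω ∈ part i ω)
    {A B : Finset Ω} (h : A ⊆ B) (j : Fin 2) (ω : Ω) :
    condP μ part j A ω ≤ condP μ part j B ω := by
  unfold condP
  rw [div_le_div_iff_of_pos_right (cellsum_pos μ part hμpos hmem j ω)]
  exact Finset.sum_le_sum_of_subset_of_nonneg
    (Finset.inter_subset_inter_right h) (fun x _ _ => (hμpos x).le)

lemma condP_nonneg (hμpos : ∀ ω : Ω, 0 < μ ω) (j : Fin 2) (A : Finset Ω) (ω : Ω) :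
    0 ≤ condP μ part j A ω :=
  div_nonneg (Finset.sum_nonneg fun x _ => (hμpos x).le)
    (Finset.sum_nonneg fun x _ => (hμpos x).le)

/-- If the conditional probability of `C` is `1`, the whole cell lies inside `C`. -/
lemma cell_subset_of_condP_eq_one (hμpos : ∀ ω : Ω, 0 < μ ω)
    (hmem : ∀ (i : Fin 2) (ω : Ω), ω ∈ part i ω) {C : Finset Ω} {j : Fin 2} {ω : Ω}
    (h : condP μ part j C ω = 1) : part j ω ⊆ C := by
  unfold condP at h
  rw [div_eq_one_iff_eq (cellsum_pos μ part hμpos hmem j ω).ne'] at h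
  by_contra hsub
  obtain ⟨x, hx, hxC⟩ := Finset.not_subset.mp hsub
  have hlt : ∑ y ∈ C ∩ part j ω, μ y < ∑ y ∈ part j ω, μ y := by
    apply Finset.sum_lt_sum_of_subset Finset.inter_subset_right hx
      (by simp [hxC]) (hμpos x) (fun y _ _ => (hμpos y).le)
  exact absurd h hlt.ne

/-- If the whole cell lies inside `C`, the conditional probability of `C` is `1`. -/
lemma condP_eq_one_of_cell_subset {C : Finset Ω} {j : Fin 2} {ω : Ω}
    (hμpos : ∀ ω : Ω, 0 < μ ω) (hmem : ∀ (i : Fin 2) (ω : Ω), ω ∈ part i ω)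
    (h : part j ω ⊆ C) : condP μ part j C ω = 1 := by
  unfold condP
  rw [Finset.inter_eq_right.mpr h,
    div_self (cellsum_pos μ part hμpos hmem j ω).ne']

lemma fin2_cases : ∀ i j : Fin 2, j = i ∨ j = 1 - i := by decide

end AuxLemmas

/-- Rational p-belief strategy, second case: if player `i` does not `p*`-believe any
`p*`-evident `C`-indicating event at `ω`, then the expected payoff of playing `A` is
strictly less than `c`. -/
theorem rational_pBelief_play_B [Fintype Ω] [DecidableEq Ω] [Nonempty Ω]
    (μ : Ω → ℝ) (part : Fin 2 → Ω → Finset Ω)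
    (hμpos : ∀ ω : Ω, 0 < μ ω) (hμsum : ∑ ω : Ω, μ ω = 1)
    (hmem : ∀ (i : Fin 2) (ω : Ω), ω ∈ part i ω)
    (hcell : ∀ (i : Fin 2) (ω ω' : Ω), ω' ∈ part i ω → part i ω' = part i ω)
    (a b c d : ℝ) (hac : c < a) (hbc : b < c) (hdc : d < c)
    (C : Finset Ω) (i : Fin 2) (ω : Ω)
    (pstar : ℝ) (hpstar : pstar = (c - b) / (a - b))
    (hnoiseless : ∀ (j : Fin 2) (ω' : Ω),
      (∑ x ∈ C, μ x) < condP μ part j C ω' → condP μ part j C ω' = 1)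
    (hprior : (∑ x ∈ C, μ x) < pstar)
    (SA : Finset Ω)
    (hSA : ∀ ω' : Ω, ω' ∈ SA ↔
      ∃ F : Finset Ω, pEvidentInd μ part pstar C F ∧ pstar ≤ condP μ part (1 - i) F ω')
    (hbelief : ¬ ∃ F : Finset Ω, pEvidentInd μ part pstar C F ∧ pstar ≤ condP μ part i F ω) :
    a * condP μ part i (SA ∩ C) ω + d * condP μ part i (SA \ C) ω +
      b * condP μ part i (Finset.univ \ SA) ω < c := by
  classical
  have hab : (0:ℝ) < a - b := by linarith
  have hp0 : 0 < pstar := by rw [hpstar]; exact div_pos (by linarith) hab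
  have hp1 : pstar < 1 := by
    rw [hpstar, div_lt_one hab]; linarith
  -- the union of all pstar-evident C-indicating events
  set E : Finset Ω :=
    ((Finset.univ : Finset (Finset Ω)).filter
      (fun F => pEvidentInd μ part pstar C F)).biUnion id with hE
  have hEmem : ∀ x : Ω, x ∈ E ↔ ∃ F : Finset Ω, pEvidentInd μ part pstar C F ∧ x ∈ F := by
    intro x
    simp [hE, Finset.mem_biUnion]
  have hFsubE : ∀ F : Finset Ω, pEvidentInd μ part pstar C F → F ⊆ E := by
    intro F hF x hx
    exact (hEmem x).mpr ⟨F, hF, hx⟩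
  -- every pstar-evident C-indicating event has all its cells inside C
  have hcellC : ∀ (F : Finset Ω), pEvidentInd μ part pstar C F →
      ∀ j : Fin 2, ∀ x ∈ F, part j x ⊆ C := by
    intro F hF j x hx
    have h1 : condP μ part j C x = 1 :=
      hnoiseless j x (lt_of_lt_of_le hprior (hF.2 j x hx))
    exact cell_subset_of_condP_eq_one μ part hμpos hmem h1
  -- E is itself pstar-evident C-indicating
  have hEind : pEvidentInd μ part pstar C E := by
    constructor
    · intro j x hx
      obtain ⟨F, hF, hxF⟩ := (hEmem x).mp hx
      exact (hF.1 j x hxF).trans (condP_mono μ part hμpos hmem (hFsubE F hF) j x)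
    · intro j x hx
      obtain ⟨F, hF, hxF⟩ := (hEmem x).mp hx
      exact hF.2 j x hxF
  -- SA is contained in C, and its (1-i)-cells are, and E is pstar-believed there
  have hSAprop : ∀ x ∈ SA, part (1-i) x ⊆ C ∧ pstar ≤ condP μ part (1-i) E x := by
    intro x hx
    obtain ⟨F, hF, hFx⟩ := (hSA x).mp hx
    have hFC : F ⊆ C := fun y hy => (hcellC F hF (1-i) y hy) (hmem (1-i) y)
    have hEx : pstar ≤ condP μ part (1-i) E x :=
      hFx.trans (condP_mono μ part hμpos hmem (hFsubE F hF) (1-i) x)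
    have hCx : condP μ part (1-i) C x = 1 := by
      apply hnoiseless (1-i) x
      calc (∑ x ∈ C, μ x) < pstar := hprior
        _ ≤ condP μ part (1-i) F x := hFx
        _ ≤ condP μ part (1-i) C x := condP_mono μ part hμpos hmem hFC (1-i) x
    exact ⟨cell_subset_of_condP_eq_one μ part hμpos hmem hCx, hEx⟩
  have hSAC : SA ⊆ C := fun x hx => ((hSAprop x hx).1) (hmem (1-i) x)
  -- key claim: player i assigns probability < pstar to SA at ω
  have hkey : condP μ part i SA ω < pstar := by
    by_contra hge
    push_neg at hge
    have hCω : part i ω ⊆ C := by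
      apply cell_subset_of_condP_eq_one μ part hμpos hmem
      apply hnoiseless i ω
      calc (∑ x ∈ C, μ x) < pstar := hprior
        _ ≤ condP μ part i SA ω := hge
        _ ≤ condP μ part i C ω := condP_mono μ part hμpos hmem hSAC i ω
    set F : Finset Ω := E ∪ (SA ∩ part i ω) with hFdef
    have hSAω : SA ∩ part i ω ⊆ F := Finset.subset_union_right
    have hcondSA : condP μ part i (SA ∩ part i ω) ω = condP μ part i SA ω := by
      unfold condP
      rw [Finset.inter_assoc, Finset.inter_self]
    have hFind : pEvidentInd μ part pstar C F := by
      have key : ∀ j : Fin 2, ∀ x ∈ F,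
          pstar ≤ condP μ part j F x ∧ pstar ≤ condP μ part j C x := by
        intro j x hx
        rcases Finset.mem_union.mp hx with hxE | hxI
        · exact ⟨(hEind.1 j x hxE).trans
            (condP_mono μ part hμpos hmem Finset.subset_union_left j x),
            hEind.2 j x hxE⟩
        · obtain ⟨hxSA, hxcell⟩ := Finset.mem_inter.mp hxI
          rcases fin2_cases i j with hji | hji
          · rw [hji]
            have hcx : part i x = part i ω := hcell i ω x hxcell
            have hcondeq : ∀ X : Finset Ω, condP μ part i X x = condP μ part i X ω := by
              intro X; unfold condP; rw [hcx]
            constructor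
            · rw [hcondeq]
              calc pstar ≤ condP μ part i SA ω := hge
                _ = condP μ part i (SA ∩ part i ω) ω := hcondSA.symm
                _ ≤ condP μ part i F ω := condP_mono μ part hμpos hmem hSAω i ω
            · rw [hcondeq, condP_eq_one_of_cell_subset μ part hμpos hmem hCω]
              exact hp1.le
          · rw [hji]
            obtain ⟨hxC, hEx⟩ := hSAprop x hxSA
            constructor
            · exact hEx.trans
                (condP_mono μ part hμpos hmem Finset.subset_union_left (1-i) x)
            · rw [condP_eq_one_of_cell_subset μ part hμpos hmem hxC]
              exact hp1.le
      exact ⟨fun j x hx => (key j x hx).1, fun j x hx => (key j x hx).2⟩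
    apply hbelief
    refine ⟨F, hFind, ?_⟩
    calc pstar ≤ condP μ part i SA ω := hge
      _ = condP μ part i (SA ∩ part i ω) ω := hcondSA.symm
      _ ≤ condP μ part i F ω := condP_mono μ part hμpos hmem hSAω i ω
  -- now compute the payoff
  have hdiff : SA \ C = ∅ := Finset.sdiff_eq_empty_iff_subset.mpr hSAC
  have hinter : SA ∩ C = SA := Finset.inter_eq_left.mpr hSAC
  have hzero : condP μ part i (SA \ C) ω = 0 := by
    rw [hdiff]; unfold condP; simp
  have hcompl : condP μ part i (Finset.univ \ SA) ω = 1 - condP μ part i SA ω := by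
    unfold condP
    have hsplit : ∑ x ∈ (Finset.univ \ SA) ∩ part i ω, μ x
        = (∑ x ∈ part i ω, μ x) - ∑ x ∈ SA ∩ part i ω, μ x := by
      have : (Finset.univ \ SA) ∩ part i ω = part i ω \ (SA ∩ part i ω) := by
        ext x; simp [Finset.mem_sdiff, Finset.mem_inter]; tauto
      rw [this, Finset.sum_sdiff_eq_sub Finset.inter_subset_right]
    rw [hsplit, sub_div,
      div_self (cellsum_pos μ part hμpos hmem i ω).ne']
  rw [hinter, hzero, hcompl]
  have hps : (a - b) * pstar = c - b := by
    rw [hpstar]; field_simp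
  nlinarith [hkey, hab]
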